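/- Mendelsohn equations: Let D be a t-(v,k,λ) design and let v ∈ C(D)^⊥ be a nonzero vector of weight w. For i ≥ 0 let n_i be the number of blocks of D intersecting the support of v in exactly i points. Then for each j = 0,1,...,t, the sum over i of C(i,j)·n_i equals λ_j · C(w,j), where λ_j = λ·C(v-j,t-j)/C(k-j,t-j). -/

import Mathlib

open Finset

def IsDesign (v t k lam : ℕ) (B : Finset (Finset (Fin v))) : Prop :=
  (∀ b ∈ B, b.card = k) ∧
  ∀ T : Finset (Fin v), T.card = t → (B.filter (fun b => T ⊆ b)).card = lam

def IsSelfOrthogonalDesign (v t k lam : ℕ) (B : Finset (Finset (Fin v))) : Prop :=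
  IsDesign v t k lam B ∧ ∀ b₁ ∈ B, ∀ b₂ ∈ B, b₁ ≠ b₂ → (b₁ ∩ b₂).card % 2 = k % 2

def blockVec {v : ℕ} (b : Finset (Fin v)) : Fin v → ZMod 2 := fun i => if i ∈ b then 1 else 0

def designCode (v : ℕ) (B : Finset (Finset (Fin v))) : Submodule (ZMod 2) (Fin v → ZMod 2) :=
  Submodule.span (ZMod 2) (blockVec '' ↑B)

def dualSet {v : ℕ} (C : Set (Fin v → ZMod 2)) : Set (Fin v → ZMod 2) :=
  {y | ∀ x ∈ C, ∑ i, x i * y i = 0}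

def codeWt {v : ℕ} (x : Fin v → ZMod 2) : ℕ := (univ.filter fun i => x i ≠ 0).card

noncomputable def numWt {v : ℕ} (C : Submodule (ZMod 2) (Fin v → ZMod 2)) (w : ℕ) : ℕ :=
  Nat.card {x : Fin v → ZMod 2 // x ∈ C ∧ codeWt x = w}

lemma double_count {α β : Type*} (A : Finset α) (B : Finset β) (r : α → β → Prop)
    [∀ a b, Decidable (r a b)] :
    ∑ a ∈ A, (B.filter (r a)).card = ∑ b ∈ B, (A.filter (fun a => r a b)).card := by
  simp_rw [Finset.card_filter]
  exact Finset.sum_comm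

lemma count_supersets {α : Type*} [DecidableEq α] (u J : Finset α) (hJ : J ⊆ u) (n : ℕ)
    (hn : J.card ≤ n) :
    ((u.powersetCard n).filter (fun T => J ⊆ T)).card = (u.card - J.card).choose (n - J.card) := by
  rw [← Finset.card_sdiff_of_subset hJ, ← Finset.card_powersetCard]
  apply Finset.card_bij' (fun T _ => T \ J) (fun A _ => A ∪ J)
  · intro T hT
    simp only [mem_filter, Finset.mem_powersetCard] at hT
    simp only [Finset.mem_powersetCard]
    exact ⟨sdiff_subset_sdiff hT.1.1 le_rfl, by rw [Finset.card_sdiff_of_subset hT.2, hT.1.2]⟩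
  · intro A hA
    simp only [Finset.mem_powersetCard] at hA
    have hdisj : Disjoint A J := Finset.disjoint_of_subset_left hA.1 (Finset.sdiff_disjoint)
    simp only [mem_filter, Finset.mem_powersetCard]
    refine ⟨⟨Finset.union_subset (hA.1.trans (Finset.sdiff_subset)) hJ, ?_⟩,
      Finset.subset_union_right⟩
    rw [Finset.card_union_of_disjoint hdisj, hA.2]
    omega
  · intro T hT
    simp only [mem_filter] at hT
    exact Finset.sdiff_union_of_subset hT.2
  · intro A hA
    simp only [Finset.mem_powersetCard] at hA
    have hdisj : Disjoint A J := Finset.disjoint_of_subset_left hA.1 (Finset.sdiff_disjoint)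
    exact Finset.union_sdiff_cancel_right hdisj

lemma replication (v t k lam : ℕ) (B : Finset (Finset (Fin v))) (hD : IsDesign v t k lam B)
    (j : ℕ) (hj : j ≤ t) (J : Finset (Fin v)) (hJ : J.card = j) :
    (B.filter (fun b => J ⊆ b)).card * (k - j).choose (t - j)
      = lam * (v - j).choose (t - j) := by
  set A := ((univ : Finset (Fin v)).powersetCard t).filter (fun T => J ⊆ T) with hA
  have key := double_count A B (fun T b => T ⊆ b)
  have h1 : ∑ T ∈ A, (B.filter (fun b => T ⊆ b)).card = (v - j).choose (t - j) * lam := by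
    rw [Finset.sum_congr rfl (fun T hT => ?_), Finset.sum_const, smul_eq_mul]
    · congr 1
      have := count_supersets (univ : Finset (Fin v)) J (Finset.subset_univ J) t (hJ ▸ hj)
      rw [Finset.card_univ, Fintype.card_fin, hJ] at this
      exact this
    · simp only [hA, mem_filter, Finset.mem_powersetCard] at hT
      exact hD.2 T hT.1.2
  have h2 : ∀ b ∈ B, (A.filter (fun T => T ⊆ b)).card
      = if J ⊆ b then (k - j).choose (t - j) else 0 := by
    intro b hb
    by_cases h : J ⊆ b
    · rw [if_pos h]
      have heq : A.filter (fun T => T ⊆ b) = (b.powersetCard t).filter (fun T => J ⊆ T) := by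
        ext T
        simp only [hA, mem_filter, Finset.mem_powersetCard, Finset.subset_univ, true_and]
        tauto
      rw [heq, count_supersets b J h t (hJ ▸ hj), hD.1 b hb, hJ]
    · rw [if_neg h, Finset.card_eq_zero, Finset.eq_empty_iff_forall_notMem]
      intro T hT
      simp only [hA, mem_filter, Finset.mem_powersetCard] at hT
      exact h (hT.1.2.trans hT.2)
  calc (B.filter (fun b => J ⊆ b)).card * (k - j).choose (t - j)
      = ∑ b ∈ B.filter (fun b => J ⊆ b), (k - j).choose (t - j) := by
        rw [Finset.sum_const, smul_eq_mul]
    _ = ∑ b ∈ B, if J ⊆ b then (k - j).choose (t - j) else 0 := by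
        rw [Finset.sum_filter]
    _ = ∑ b ∈ B, (A.filter (fun T => T ⊆ b)).card := by
        exact (Finset.sum_congr rfl h2).symm
    _ = ∑ T ∈ A, (B.filter (fun b => T ⊆ b)).card := key.symm
    _ = lam * (v - j).choose (t - j) := by rw [h1, mul_comm]

theorem mendelsohn_equations (v t k lam : ℕ) (B : Finset (Finset (Fin v)))
    (hD : IsDesign v t k lam B) (y : Fin v → ZMod 2)
    (hy : y ∈ dualSet (designCode v B : Set (Fin v → ZMod 2))) (hy0 : y ≠ 0)
    (w : ℕ) (hw : codeWt y = w) (j : ℕ) (hj : j ≤ t) :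
    (∑ i ∈ Finset.range (w + 1),
        Nat.choose i j *
          (B.filter (fun b => (b ∩ (univ.filter fun p => y p ≠ 0)).card = i)).card)
        * Nat.choose (k - j) (t - j)
      = lam * Nat.choose (v - j) (t - j) * Nat.choose w j := by
  set S : Finset (Fin v) := univ.filter (fun p => y p ≠ 0) with hS
  have hSw : S.card = w := hw
  have step1 : ∑ i ∈ Finset.range (w + 1),
      Nat.choose i j * (B.filter (fun b => (b ∩ S).card = i)).card
      = ∑ b ∈ B, ((b ∩ S).card).choose j := by
    have hmap : ∀ b ∈ B, (b ∩ S).card ∈ Finset.range (w + 1) := by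
      intro b _
      rw [Finset.mem_range, Nat.lt_succ_iff, ← hSw]
      exact Finset.card_le_card Finset.inter_subset_right
    rw [← Finset.sum_fiberwise_of_maps_to hmap (fun b => ((b ∩ S).card).choose j)]
    refine Finset.sum_congr rfl fun i _ => ?_
    rw [Finset.sum_congr rfl (fun b hb => by rw [(Finset.mem_filter.mp hb).2]),
      Finset.sum_const, smul_eq_mul, mul_comm]
  have step2 : ∀ b : Finset (Fin v), ((b ∩ S).card).choose j
      = ((S.powersetCard j).filter (fun J => J ⊆ b)).card := by
    intro b
    rw [← Finset.card_powersetCard]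
    congr 1
    ext J
    simp only [Finset.mem_powersetCard, mem_filter, Finset.subset_inter_iff]
    tauto
  have step3 : ∑ b ∈ B, ((S.powersetCard j).filter (fun J => J ⊆ b)).card
      = ∑ J ∈ S.powersetCard j, (B.filter (fun b => J ⊆ b)).card :=
    (double_count (S.powersetCard j) B (fun J b => J ⊆ b)).symm
  calc (∑ i ∈ Finset.range (w + 1),
        Nat.choose i j * (B.filter (fun b => (b ∩ S).card = i)).card)
        * Nat.choose (k - j) (t - j)
      = (∑ J ∈ S.powersetCard j, (B.filter (fun b => J ⊆ b)).card)
        * Nat.choose (k - j) (t - j) := by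
        rw [step1, Finset.sum_congr rfl (fun b _ => step2 b), step3]
    _ = ∑ J ∈ S.powersetCard j,
        (B.filter (fun b => J ⊆ b)).card * Nat.choose (k - j) (t - j) := by
        rw [Finset.sum_mul]
    _ = ∑ J ∈ S.powersetCard j, lam * Nat.choose (v - j) (t - j) := by
        refine Finset.sum_congr rfl fun J hJ => ?_
        exact replication v t k lam B hD j hj J (Finset.mem_powersetCard.mp hJ).2
    _ = lam * Nat.choose (v - j) (t - j) * Nat.choose w j := by
        rw [Finset.sum_const, smul_eq_mul, Finset.card_powersetCard, hSw, mul_comm]
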